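/- Bounds among notions of heat: if the environment B with Hamiltonian H_B starts in the Gibbs state γ_B(β) at temperature T = 1/β and ends in an arbitrary state ρ_B', then T·ΔS_B ≤ ΔQ ≤ ΔE_B, where ΔS_B = S(ρ_B') - S(γ_B(β)), ΔE_B = E(ρ_B') - E(γ_B(β)), and ΔQ = B(ρ_B') - B(γ_B(β)) is the change of bound energy. -/

import Mathlib

open Matrix BigOperators
open scoped ComplexOrder

noncomputable section

variable {n : Type*} [Fintype n] [DecidableEq n]

/-- A density matrix: positive semidefinite with unit trace. -/
def IsDensity (ρ : Matrix n n ℂ) : Prop := ρ.PosSemidef ∧ ρ.trace = 1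

/-- Von Neumann entropy via eigenvalues. -/
noncomputable def vnEntropy (ρ : Matrix n n ℂ) : ℝ :=
  if h : ρ.IsHermitian then ∑ i, Real.negMulLog (h.eigenvalues i) else 0

/-- Energy of a state with respect to a Hamiltonian. -/
noncomputable def energy (H ρ : Matrix n n ℂ) : ℝ := ((H * ρ).trace).re

/-- Gibbs state at inverse temperature β. -/
noncomputable def gibbs (H : Matrix n n ℂ) (β : ℝ) : Matrix n n ℂ :=
  ((NormedSpace.exp (-(β : ℂ) • H)).trace)⁻¹ • NormedSpace.exp (-(β : ℂ) • H)

/-- Bound energy: minimal energy among density matrices with the same entropy. -/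
noncomputable def boundEnergy (H ρ : Matrix n n ℂ) : ℝ :=
  sInf {e | ∃ σ : Matrix n n ℂ, IsDensity σ ∧ vnEntropy σ = vnEntropy ρ ∧ energy H σ = e}

/-- Free energy. -/
noncomputable def freeEnergy (H ρ : Matrix n n ℂ) : ℝ := energy H ρ - boundEnergy H ρ

/-- Matrix logarithm of a Hermitian matrix via spectral decomposition. -/
noncomputable def mlog (A : Matrix n n ℂ) : Matrix n n ℂ :=
  if h : A.IsHermitian then
    (h.eigenvectorUnitary : Matrix n n ℂ) *
      Matrix.diagonal (fun i => (Real.log (h.eigenvalues i) : ℂ)) *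
      star (h.eigenvectorUnitary : Matrix n n ℂ)
  else 0

/-- Quantum relative entropy D(ρ‖σ) = Tr(ρ log ρ - ρ log σ). -/
noncomputable def relEntropy (ρ σ : Matrix n n ℂ) : ℝ :=
  ((ρ * (mlog ρ - mlog σ)).trace).re

/-- Partial trace over the second factor. -/
noncomputable def margA {nA nB : Type*} [Fintype nA] [Fintype nB]
    (ρ : Matrix (nA × nB) (nA × nB) ℂ) : Matrix nA nA ℂ :=
  fun i i' => ∑ j, ρ (i, j) (i', j)

/-- Partial trace over the first factor. -/
noncomputable def margB {nA nB : Type*} [Fintype nA] [Fintype nB]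
    (ρ : Matrix (nA × nB) (nA × nB) ℂ) : Matrix nB nB ℂ :=
  fun j j' => ∑ i, ρ (i, j) (i, j')


-- ===== Auxiliary lemmas =====
section Aux

open Polynomial

variable {m : Type*} [Fintype m] [DecidableEq m]

lemma aux_charpoly_conj (U : Matrix.unitaryGroup m ℂ) (M : Matrix m m ℂ) :
    ((U : Matrix m m ℂ) * M * star (U : Matrix m m ℂ)).charpoly = M.charpoly := by
  classical
  let f : Matrix m m ℂ →+* Matrix m m ℂ[X] := (Polynomial.C : ℂ →+* ℂ[X]).mapMatrix
  have hUU : f (U : Matrix m m ℂ) * f (star (U : Matrix m m ℂ)) = 1 := by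
    rw [← _root_.map_mul, Matrix.mem_unitaryGroup_iff.mp U.2, _root_.map_one]
  have hUU' : f (star (U : Matrix m m ℂ)) * f (U : Matrix m m ℂ) = 1 := by
    rw [← _root_.map_mul, Matrix.mem_unitaryGroup_iff'.mp U.2, _root_.map_one]
  have hcm : Matrix.charmatrix ((U : Matrix m m ℂ) * M * star (U : Matrix m m ℂ))
      = f (U : Matrix m m ℂ) * Matrix.charmatrix M * f (star (U : Matrix m m ℂ)) := by
    unfold Matrix.charmatrix
    rw [mul_sub, sub_mul]
    congr 1
    · rw [mul_assoc, (Matrix.scalar_commute (X : ℂ[X]) (fun r => Commute.all _ r)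
        (f (star (U : Matrix m m ℂ)))).eq, ← mul_assoc, hUU, one_mul]
    · simp only [RingHom.mapMatrix_apply, f]
      rw [← Matrix.map_mul, ← Matrix.map_mul]
  have h2 : (f (U : Matrix m m ℂ)).det * (f (star (U : Matrix m m ℂ))).det = 1 := by
    rw [← Matrix.det_mul, hUU, Matrix.det_one]
  rw [Matrix.charpoly, hcm, Matrix.det_mul, Matrix.det_mul, Matrix.charpoly,
    mul_comm ((f (U : Matrix m m ℂ)).det) (Matrix.charmatrix M).det, mul_assoc, h2, mul_one]

lemma aux_charpoly_diag (c : m → ℂ) :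
    (Matrix.diagonal c).charpoly = ∏ i, (X - Polynomial.C (c i)) := by
  have h : (Matrix.diagonal c).charmatrix = Matrix.diagonal (fun i => X - Polynomial.C (c i)) := by
    ext i j
    by_cases hij : i = j
    · subst hij; simp [Matrix.charmatrix_apply_eq]
    · simp [Matrix.charmatrix_apply_ne _ _ _ hij, Matrix.diagonal_apply_ne _ hij]
  rw [Matrix.charpoly, h, Matrix.det_diagonal]

lemma aux_eig_multiset {A : Matrix m m ℂ} (hA : A.IsHermitian) (U : Matrix.unitaryGroup m ℂ)
    (μ : m → ℝ)
    (h : A = (U : Matrix m m ℂ) * Matrix.diagonal (fun i => (μ i : ℂ)) * star (U : Matrix m m ℂ)) :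
    Finset.univ.val.map hA.eigenvalues = Finset.univ.val.map μ := by
  have hd : ∀ (ν : m → ℝ), (∏ i, ((X : ℂ[X]) - Polynomial.C ((ν i : ℂ)))).roots
      = Finset.univ.val.map (fun i => ((ν i : ℝ) : ℂ)) := by
    intro ν
    have : (∏ i, ((X : ℂ[X]) - Polynomial.C ((ν i : ℂ))))
        = ((Finset.univ.val.map (fun i => ((ν i : ℝ) : ℂ))).map (fun a => X - Polynomial.C a)).prod := by
      rw [Multiset.map_map]; rfl
    rw [this, Polynomial.roots_multiset_prod_X_sub_C]
  have h1 : A.charpoly = ∏ i, ((X : ℂ[X]) - Polynomial.C ((μ i : ℂ))) := by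
    rw [h, aux_charpoly_conj, aux_charpoly_diag]
  have h2 : A.charpoly = ∏ i, ((X : ℂ[X]) - Polynomial.C ((hA.eigenvalues i : ℂ))) := by
    conv_lhs => rw [hA.spectral_theorem, Unitary.conjStarAlgAut_apply]
    rw [aux_charpoly_conj, aux_charpoly_diag]; rfl
  have hroots := congrArg Polynomial.roots (h2.symm.trans h1)
  rw [hd, hd] at hroots
  have := congrArg (Multiset.map Complex.re) hroots
  simpa [Multiset.map_map, Function.comp] using this

lemma aux_vnEntropy_eq {A : Matrix m m ℂ} (hA : A.IsHermitian) (U : Matrix.unitaryGroup m ℂ)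
    (μ : m → ℝ)
    (h : A = (U : Matrix m m ℂ) * Matrix.diagonal (fun i => (μ i : ℂ)) * star (U : Matrix m m ℂ)) :
    vnEntropy A = ∑ i, Real.negMulLog (μ i) := by
  rw [vnEntropy, dif_pos hA]
  have hm := aux_eig_multiset hA U μ h
  have e1 : ∑ i, Real.negMulLog (hA.eigenvalues i)
      = ((Finset.univ.val.map hA.eigenvalues).map Real.negMulLog).sum := by
    rw [Multiset.map_map]; rfl
  have e2 : ∑ i, Real.negMulLog (μ i)
      = ((Finset.univ.val.map μ).map Real.negMulLog).sum := by
    rw [Multiset.map_map]; rfl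
  rw [e1, e2, hm]

lemma aux_exp_spectral (H : Matrix m m ℂ) (hH : H.IsHermitian) (β : ℝ) :
    NormedSpace.exp (-(β : ℂ) • H)
      = (hH.eigenvectorUnitary : Matrix m m ℂ)
        * Matrix.diagonal (fun i => ((Real.exp (-(β * hH.eigenvalues i)) : ℝ) : ℂ))
        * star (hH.eigenvectorUnitary : Matrix m m ℂ) := by
  set V : Matrix m m ℂ := (hH.eigenvectorUnitary : Matrix m m ℂ) with hV
  have hVinv : V⁻¹ = star V :=
    Matrix.inv_eq_right_inv (Matrix.mem_unitaryGroup_iff.mp hH.eigenvectorUnitary.2)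
  have hUnit : IsUnit V :=
    ⟨⟨V, star V, Matrix.mem_unitaryGroup_iff.mp hH.eigenvectorUnitary.2,
      Matrix.mem_unitaryGroup_iff'.mp hH.eigenvectorUnitary.2⟩, rfl⟩
  have hdiag : -(β : ℂ) • Matrix.diagonal (RCLike.ofReal ∘ hH.eigenvalues)
      = Matrix.diagonal (fun i => (-(β * hH.eigenvalues i) : ℂ)) := by
    ext i j
    by_cases hij : i = j
    · subst hij
      simp [Function.comp]
    · simp [Matrix.diagonal_apply_ne _ hij]
  have harg : -(β : ℂ) • H = V * Matrix.diagonal (fun i => (-(β * hH.eigenvalues i) : ℂ)) * V⁻¹ := by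
    rw [hVinv]
    conv_lhs => rw [hH.spectral_theorem, Unitary.conjStarAlgAut_apply]
    rw [← Matrix.smul_mul, ← Matrix.mul_smul, hdiag]
  have hfun : (fun i => NormedSpace.exp ((-(β * hH.eigenvalues i) : ℂ)))
      = fun i => ((Real.exp (-(β * hH.eigenvalues i)) : ℝ) : ℂ) := by
    funext i
    rw [← Complex.exp_eq_exp_ℂ, Complex.ofReal_exp]
    congr 1
    push_cast
    ring
  rw [harg, Matrix.exp_conj V _ hUnit, Matrix.exp_diagonal, hVinv, Pi.exp_def, hfun]

lemma aux_trace_conj (U : Matrix.unitaryGroup m ℂ) (c : m → ℂ) :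
    ((U : Matrix m m ℂ) * Matrix.diagonal c * star (U : Matrix m m ℂ)).trace = ∑ i, c i := by
  rw [Matrix.trace_mul_cycle, Matrix.mem_unitaryGroup_iff'.mp U.2, one_mul, Matrix.trace_diagonal]

lemma aux_trace_conj_mul (V U : Matrix.unitaryGroup m ℂ) (c p : m → ℝ) :
    ((((V : Matrix m m ℂ) * Matrix.diagonal (fun i => (c i : ℂ)) * star (V : Matrix m m ℂ))
      * ((U : Matrix m m ℂ) * Matrix.diagonal (fun i => (p i : ℂ)) * star (U : Matrix m m ℂ))).trace)
    = ((∑ j, ∑ i, c j * p i * Complex.normSq ((star (V : Matrix m m ℂ) * (U : Matrix m m ℂ)) j i) : ℝ) : ℂ) := by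
  set W : Matrix m m ℂ := star (V : Matrix m m ℂ) * (U : Matrix m m ℂ) with hW
  set Dc := Matrix.diagonal (fun i => (c i : ℂ))
  set Dp := Matrix.diagonal (fun i => (p i : ℂ))
  have hWs : star W = star (U : Matrix m m ℂ) * (V : Matrix m m ℂ) := by
    rw [hW, StarMul.star_mul, star_star]
  have h1 : ((V : Matrix m m ℂ) * Dc * star (V : Matrix m m ℂ))
      * ((U : Matrix m m ℂ) * Dp * star (U : Matrix m m ℂ))
      = (V : Matrix m m ℂ) * (Dc * W * Dp * star (U : Matrix m m ℂ)) := by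
    rw [hW]; simp only [Matrix.mul_assoc]
  rw [h1, Matrix.trace_mul_comm]
  have h2 : Dc * W * Dp * star (U : Matrix m m ℂ) * (V : Matrix m m ℂ)
      = Dc * W * Dp * star W := by rw [hWs, Matrix.mul_assoc]
  rw [h2]
  have h3 : (Dc * W * Dp * star W).trace = ∑ j, ∑ i, (Dc * W * Dp) j i * star (W j i) := by
    simp [Matrix.trace, Matrix.diag, Matrix.mul_apply, Matrix.conjTranspose_apply]
  rw [h3]
  have h4 : ∀ j i, (Dc * W * Dp) j i * star (W j i)
      = ((c j * p i * Complex.normSq (W j i) : ℝ) : ℂ) := by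
    intro j i
    have h5 : (Dc * W * Dp) j i = (c j : ℂ) * W j i * (p i : ℂ) := by
      simp [Dc, Dp, Matrix.diagonal_mul, Matrix.mul_diagonal]
    rw [h5, show (c j : ℂ) * W j i * (p i : ℂ) * star (W j i)
        = (c j : ℂ) * (p i : ℂ) * (W j i * star (W j i)) by ring,
      Complex.star_def, Complex.mul_conj]
    push_cast
    ring
  simp_rw [h4]
  push_cast
  rfl

lemma aux_row_sum (W : Matrix.unitaryGroup m ℂ) (j : m) :
    ∑ i, Complex.normSq ((W : Matrix m m ℂ) j i) = 1 := by
  have h2 : ((W : Matrix m m ℂ) * star (W : Matrix m m ℂ)) j j = 1 := by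
    rw [Matrix.mem_unitaryGroup_iff.mp W.2]; exact Matrix.one_apply_eq j
  have h3 : ((W : Matrix m m ℂ) * star (W : Matrix m m ℂ)) j j
      = ((∑ i, Complex.normSq ((W : Matrix m m ℂ) j i) : ℝ) : ℂ) := by
    rw [Matrix.mul_apply]
    push_cast
    refine Finset.sum_congr rfl fun i _ => ?_
    rw [Matrix.star_apply, Complex.star_def, Complex.mul_conj]
  rw [h3] at h2
  exact_mod_cast h2

lemma aux_col_sum (W : Matrix.unitaryGroup m ℂ) (i : m) :
    ∑ j, Complex.normSq ((W : Matrix m m ℂ) j i) = 1 := by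
  have h2 : (star (W : Matrix m m ℂ) * (W : Matrix m m ℂ)) i i = 1 := by
    rw [Matrix.mem_unitaryGroup_iff'.mp W.2]; exact Matrix.one_apply_eq i
  have h3 : (star (W : Matrix m m ℂ) * (W : Matrix m m ℂ)) i i
      = ((∑ j, Complex.normSq ((W : Matrix m m ℂ) j i) : ℝ) : ℂ) := by
    rw [Matrix.mul_apply]
    push_cast
    refine Finset.sum_congr rfl fun j _ => ?_
    rw [Matrix.star_apply, Complex.star_def, mul_comm, Complex.mul_conj]
  rw [h3] at h2
  exact_mod_cast h2

lemma aux_klein (W : Matrix.unitaryGroup m ℂ) (lam p : m → ℝ) (β : ℝ)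
    (hZpos : 0 < ∑ j, Real.exp (-(β * lam j)))
    (hp0 : ∀ i, 0 ≤ p i) (hp1 : ∑ i, p i = 1) :
    ∑ i, Real.negMulLog (p i)
      ≤ β * (∑ j, ∑ i, lam j * p i * Complex.normSq ((W : Matrix m m ℂ) j i))
        + Real.log (∑ j, Real.exp (-(β * lam j))) := by
  set Z := ∑ j, Real.exp (-(β * lam j)) with hZ
  set q : m → ℝ := fun j => Real.exp (-(β * lam j)) / Z with hq
  set c : m → m → ℝ := fun j i => Complex.normSq ((W : Matrix m m ℂ) j i) with hc
  have hq0 : ∀ j, 0 < q j := fun j => div_pos (Real.exp_pos _) hZpos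
  have hqsum : ∑ j, q j = 1 := by
    rw [hq, ← Finset.sum_div, ← hZ, div_self (ne_of_gt hZpos)]
  have hlogq : ∀ j, β * lam j + Real.log Z = -Real.log (q j) := by
    intro j
    rw [hq]
    rw [Real.log_div (Real.exp_ne_zero _) (ne_of_gt hZpos), Real.log_exp]
    ring
  have hc0 : ∀ j i, 0 ≤ c j i := fun j i => Complex.normSq_nonneg _
  have hrow : ∀ j, ∑ i, c j i = 1 := fun j => aux_row_sum W j
  have hcol : ∀ i, ∑ j, c j i = 1 := fun i => aux_col_sum W i
  have hpoint : ∀ j i, c j i * Real.negMulLog (p i)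
      ≤ c j i * (p i * (β * lam j + Real.log Z) + q j - p i) := by
    intro j i
    refine mul_le_mul_of_nonneg_left ?_ (hc0 j i)
    rw [hlogq j]
    rcases eq_or_lt_of_le (hp0 i) with h | h
    · rw [← h]
      simp [Real.negMulLog]
      exact le_of_lt (hq0 j)
    · have hlog : Real.log (q j / p i) ≤ q j / p i - 1 :=
        Real.log_le_sub_one_of_pos (div_pos (hq0 j) h)
      rw [Real.log_div (ne_of_gt (hq0 j)) (ne_of_gt h)] at hlog
      have := mul_le_mul_of_nonneg_left hlog (le_of_lt h)
      rw [mul_sub, mul_sub, mul_div_cancel₀ _ (ne_of_gt h), mul_one] at this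
      rw [Real.negMulLog]
      nlinarith
  have hL : ∑ i, Real.negMulLog (p i) = ∑ j, ∑ i, c j i * Real.negMulLog (p i) := by
    rw [Finset.sum_comm]
    refine Finset.sum_congr rfl fun i _ => ?_
    rw [← Finset.sum_mul, hcol, one_mul]
  have hmain : ∑ j, ∑ i, c j i * Real.negMulLog (p i)
      ≤ ∑ j, ∑ i, c j i * (p i * (β * lam j + Real.log Z) + q j - p i) :=
    Finset.sum_le_sum fun j _ => Finset.sum_le_sum fun i _ => hpoint j i
  have hR : ∑ j, ∑ i, c j i * (p i * (β * lam j + Real.log Z) + q j - p i)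
      = β * (∑ j, ∑ i, lam j * p i * c j i) + Real.log Z := by
    have e1 : ∀ j i, c j i * (p i * (β * lam j + Real.log Z) + q j - p i)
        = β * (lam j * p i * c j i) + Real.log Z * (c j i * p i) + c j i * q j - c j i * p i := by
      intro j i; ring
    simp_rw [e1]
    rw [show ∀ f g h k : m → m → ℝ, (∑ j, ∑ i, (f j i + g j i + h j i - k j i))
        = (∑ j, ∑ i, f j i) + (∑ j, ∑ i, g j i) + (∑ j, ∑ i, h j i) - (∑ j, ∑ i, k j i)
      from fun f g h k => by simp [Finset.sum_add_distrib, Finset.sum_sub_distrib]]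
    have hcp : ∑ j, ∑ i, c j i * p i = 1 := by
      rw [Finset.sum_comm]
      calc ∑ i, ∑ j, c j i * p i = ∑ i, p i := by
            refine Finset.sum_congr rfl fun i _ => ?_
            rw [← Finset.sum_mul, hcol, one_mul]
        _ = 1 := hp1
    have hcq : ∑ j, ∑ i, c j i * q j = 1 := by
      calc ∑ j, ∑ i, c j i * q j = ∑ j, q j := by
            refine Finset.sum_congr rfl fun j _ => ?_
            rw [← Finset.sum_mul, hrow, one_mul]
        _ = 1 := hqsum
    rw [hcq]
    simp_rw [← Finset.mul_sum]
    rw [hcp, mul_one]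
    ring
  rw [hL]
  calc ∑ j, ∑ i, c j i * Real.negMulLog (p i)
      ≤ ∑ j, ∑ i, c j i * (p i * (β * lam j + Real.log Z) + q j - p i) := hmain
    _ = β * (∑ j, ∑ i, lam j * p i * c j i) + Real.log Z := hR

lemma aux_gibbs_spectral (H : Matrix m m ℂ) (hH : H.IsHermitian) (β : ℝ)
    (hZpos : 0 < ∑ j, Real.exp (-(β * hH.eigenvalues j))) :
    gibbs H β = (hH.eigenvectorUnitary : Matrix m m ℂ)
      * Matrix.diagonal (fun i =>
          ((Real.exp (-(β * hH.eigenvalues i)) / (∑ j, Real.exp (-(β * hH.eigenvalues j))) : ℝ) : ℂ))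
      * star (hH.eigenvectorUnitary : Matrix m m ℂ) := by
  set Z := ∑ j, Real.exp (-(β * hH.eigenvalues j)) with hZ
  have htr : (NormedSpace.exp (-(β : ℂ) • H)).trace = ((Z : ℝ) : ℂ) := by
    rw [aux_exp_spectral H hH β, aux_trace_conj, hZ]
    push_cast
    rfl
  have hsm : (((Z : ℝ) : ℂ))⁻¹ • Matrix.diagonal (fun i => ((Real.exp (-(β * hH.eigenvalues i)) : ℝ) : ℂ))
      = Matrix.diagonal (fun i => ((Real.exp (-(β * hH.eigenvalues i)) / Z : ℝ) : ℂ)) := by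
    ext i j
    by_cases hij : i = j
    · subst hij
      simp only [Matrix.smul_apply, Matrix.diagonal_apply_eq, smul_eq_mul]
      rw [← Complex.ofReal_inv, ← Complex.ofReal_mul]
      congr 1
      rw [div_eq_inv_mul]
    · simp [Matrix.diagonal_apply_ne _ hij]
  rw [gibbs, htr, aux_exp_spectral H hH β, ← Matrix.smul_mul, ← Matrix.mul_smul, hsm]

lemma aux_gibbs_density (H : Matrix m m ℂ) (hH : H.IsHermitian) (β : ℝ)
    (hZpos : 0 < ∑ j, Real.exp (-(β * hH.eigenvalues j))) :
    IsDensity (gibbs H β) := by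
  rw [aux_gibbs_spectral H hH β hZpos]
  constructor
  · have hdiag : (Matrix.diagonal (fun i =>
        ((Real.exp (-(β * hH.eigenvalues i)) / (∑ j, Real.exp (-(β * hH.eigenvalues j))) : ℝ) : ℂ))).PosSemidef := by
      rw [Matrix.posSemidef_diagonal_iff]
      intro i
      rw [Complex.zero_le_real]
      positivity
    have := hdiag.mul_mul_conjTranspose_same (hH.eigenvectorUnitary : Matrix m m ℂ)
    rwa [← Matrix.star_eq_conjTranspose] at this
  · rw [aux_trace_conj]
    rw [show ∑ i, ((Real.exp (-(β * hH.eigenvalues i)) / (∑ j, Real.exp (-(β * hH.eigenvalues j))) : ℝ) : ℂ)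
        = ((∑ i, Real.exp (-(β * hH.eigenvalues i)) / (∑ j, Real.exp (-(β * hH.eigenvalues j))) : ℝ) : ℂ)
      by push_cast; rfl]
    rw [← Finset.sum_div, div_self (ne_of_gt hZpos), Complex.ofReal_one]

lemma aux_energy_gibbs (H : Matrix m m ℂ) (hH : H.IsHermitian) (β : ℝ)
    (hZpos : 0 < ∑ j, Real.exp (-(β * hH.eigenvalues j))) :
    energy H (gibbs H β) = ∑ i, hH.eigenvalues i
      * (Real.exp (-(β * hH.eigenvalues i)) / (∑ j, Real.exp (-(β * hH.eigenvalues j)))) := by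
  set q : m → ℝ := fun i => Real.exp (-(β * hH.eigenvalues i)) / (∑ j, Real.exp (-(β * hH.eigenvalues j))) with hq
  set V := hH.eigenvectorUnitary with hV
  have hHs : H = (V : Matrix m m ℂ) * Matrix.diagonal (fun i => ((hH.eigenvalues i : ℝ) : ℂ))
      * star (V : Matrix m m ℂ) := by
    conv_lhs => rw [hH.spectral_theorem]
    rfl
  have hprod : H * gibbs H β
      = ((V : Matrix m m ℂ) * Matrix.diagonal (fun i => ((hH.eigenvalues i : ℝ) : ℂ)) * star (V : Matrix m m ℂ))
        * ((V : Matrix m m ℂ) * Matrix.diagonal (fun i => ((q i : ℝ) : ℂ)) * star (V : Matrix m m ℂ)) := by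
    rw [← hHs, ← aux_gibbs_spectral H hH β hZpos]
  rw [energy, hprod, aux_trace_conj_mul V V hH.eigenvalues q, Complex.ofReal_re]
  have hone : ∀ j i : m, Complex.normSq ((star (V : Matrix m m ℂ) * (V : Matrix m m ℂ)) j i)
      = if j = i then 1 else 0 := by
    intro j i
    rw [Matrix.mem_unitaryGroup_iff'.mp V.2]
    by_cases hij : j = i
    · subst hij; simp [Matrix.one_apply_eq]
    · simp [Matrix.one_apply_ne hij, hij]
  simp_rw [hone, mul_ite, mul_one, mul_zero, Finset.sum_ite_eq, Finset.mem_univ, if_true]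
  rfl

lemma aux_vnEntropy_gibbs (H : Matrix m m ℂ) (hH : H.IsHermitian) (β : ℝ)
    (hZpos : 0 < ∑ j, Real.exp (-(β * hH.eigenvalues j))) :
    vnEntropy (gibbs H β) = β * energy H (gibbs H β)
      + Real.log (∑ j, Real.exp (-(β * hH.eigenvalues j))) := by
  set Z := ∑ j, Real.exp (-(β * hH.eigenvalues j)) with hZ
  set q : m → ℝ := fun i => Real.exp (-(β * hH.eigenvalues i)) / Z with hq
  have hent : vnEntropy (gibbs H β) = ∑ i, Real.negMulLog (q i) :=
    aux_vnEntropy_eq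
      (by
        rw [aux_gibbs_spectral H hH β hZpos]
        have hdiag : (Matrix.diagonal (fun i => ((q i : ℝ) : ℂ))).PosSemidef := by
          rw [Matrix.posSemidef_diagonal_iff]
          intro i
          rw [Complex.zero_le_real]
          positivity
        have := hdiag.mul_mul_conjTranspose_same (hH.eigenvectorUnitary : Matrix m m ℂ)
        rw [← Matrix.star_eq_conjTranspose] at this
        exact this.isHermitian)
      hH.eigenvectorUnitary q (aux_gibbs_spectral H hH β hZpos)
  have hq0 : ∀ i, 0 < q i := fun i => div_pos (Real.exp_pos _) hZpos
  have hlogq : ∀ j, Real.log (q j) = -(β * hH.eigenvalues j) - Real.log Z := by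
    intro j
    have : q j = Real.exp (-(β * hH.eigenvalues j)) / Z := rfl
    rw [this, Real.log_div (Real.exp_ne_zero _) (ne_of_gt hZpos), Real.log_exp]
  have hqsum : ∑ j, q j = 1 := by
    have : ∑ j, q j = (∑ j, Real.exp (-(β * hH.eigenvalues j))) / Z := by
      rw [← Finset.sum_div]
    rw [this, ← hZ, div_self (ne_of_gt hZpos)]
  rw [hent, aux_energy_gibbs H hH β hZpos]
  have : ∀ i, Real.negMulLog (q i) = β * (hH.eigenvalues i * q i) + Real.log Z * q i := by
    intro i
    rw [Real.negMulLog, hlogq i]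
    ring
  simp_rw [this]
  rw [Finset.sum_add_distrib, ← Finset.mul_sum, ← Finset.mul_sum, hqsum, mul_one]

lemma aux_gibbs_var (H : Matrix m m ℂ) (hH : H.IsHermitian) (β : ℝ)
    (hZpos : 0 < ∑ j, Real.exp (-(β * hH.eigenvalues j)))
    (σ : Matrix m m ℂ) (hσ : IsDensity σ) :
    vnEntropy σ ≤ β * energy H σ + Real.log (∑ j, Real.exp (-(β * hH.eigenvalues j))) := by
  obtain ⟨hps, htr⟩ := hσ
  have hherm : σ.IsHermitian := hps.isHermitian
  set U := hherm.eigenvectorUnitary with hU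
  set p : m → ℝ := hherm.eigenvalues with hp
  have hspec : σ = (U : Matrix m m ℂ) * Matrix.diagonal (fun i => ((p i : ℝ) : ℂ)) * star (U : Matrix m m ℂ) := by
    conv_lhs => rw [hherm.spectral_theorem]
    rfl
  have hp0 : ∀ i, 0 ≤ p i := fun i => hps.eigenvalues_nonneg i
  have hp1 : ∑ i, p i = 1 := by
    rw [hspec, aux_trace_conj] at htr
    rw [show ∑ i, ((p i : ℝ) : ℂ) = ((∑ i, p i : ℝ) : ℂ) by push_cast; rfl] at htr
    exact_mod_cast htr
  set V := hH.eigenvectorUnitary with hV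
  have hWmem : star (V : Matrix m m ℂ) * (U : Matrix m m ℂ) ∈ Matrix.unitaryGroup m ℂ := by
    rw [Matrix.mem_unitaryGroup_iff]
    rw [StarMul.star_mul, star_star]
    calc star (V : Matrix m m ℂ) * (U : Matrix m m ℂ) * (star (U : Matrix m m ℂ) * (V : Matrix m m ℂ))
        = star (V : Matrix m m ℂ) * ((U : Matrix m m ℂ) * star (U : Matrix m m ℂ)) * (V : Matrix m m ℂ) := by
          simp only [Matrix.mul_assoc]
      _ = 1 := by
          rw [Matrix.mem_unitaryGroup_iff.mp U.2, Matrix.mul_one,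
            Matrix.mem_unitaryGroup_iff'.mp V.2]
  set W : Matrix.unitaryGroup m ℂ := ⟨star (V : Matrix m m ℂ) * (U : Matrix m m ℂ), hWmem⟩ with hW
  have hE : energy H σ = ∑ j, ∑ i, hH.eigenvalues j * p i
      * Complex.normSq ((W : Matrix m m ℂ) j i) := by
    rw [energy]
    conv_lhs => rw [hspec, hH.spectral_theorem, Unitary.conjStarAlgAut_apply]
    have hHspec : (V : Matrix m m ℂ) * Matrix.diagonal (RCLike.ofReal ∘ hH.eigenvalues) * star (V : Matrix m m ℂ)
        = (V : Matrix m m ℂ) * Matrix.diagonal (fun i => ((hH.eigenvalues i : ℝ) : ℂ)) * star (V : Matrix m m ℂ) := rfl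
    rw [hHspec, aux_trace_conj_mul V U hH.eigenvalues p, Complex.ofReal_re]
  have hS : vnEntropy σ = ∑ i, Real.negMulLog (p i) := by
    rw [vnEntropy, dif_pos hherm]
  rw [hS, hE]
  exact aux_klein W hH.eigenvalues p β hZpos hp0 hp1

end Aux

open Kronecker in
/-- Bounds among notions of heat: if the environment starts in the Gibbs
state γ_B(β) at temperature T = 1/β and ends in ρ_B', then
T·ΔS_B ≤ ΔQ ≤ ΔE_B, where ΔQ = B(ρ_B') - B(γ_B(β)) is the change of bound energy. -/
theorem heat_bounds {d : ℕ} (H : Matrix (Fin d) (Fin d) ℂ)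
    (hH : H.IsHermitian) (β : ℝ) (hβ : 0 < β)
    (ρ' : Matrix (Fin d) (Fin d) ℂ) (hρ' : IsDensity ρ')
    (h0 : 0 < vnEntropy ρ') (h1 : vnEntropy ρ' < Real.log d)
    (h0' : 0 < vnEntropy (gibbs H β)) (h1' : vnEntropy (gibbs H β) < Real.log d) :
    (1 / β) * (vnEntropy ρ' - vnEntropy (gibbs H β))
        ≤ boundEnergy H ρ' - boundEnergy H (gibbs H β) ∧
    boundEnergy H ρ' - boundEnergy H (gibbs H β)
        ≤ energy H ρ' - energy H (gibbs H β) := by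
  classical
  -- dimension is positive
  have hne : Nonempty (Fin d) := by
    by_contra hempty
    have hE : IsEmpty (Fin d) := not_nonempty_iff.mp hempty
    have : vnEntropy ρ' = 0 := by
      rw [vnEntropy]
      split <;> simp
    linarith
  set Z := ∑ j, Real.exp (-(β * hH.eigenvalues j)) with hZdef
  have hZpos : 0 < Z :=
    Finset.sum_pos (fun j _ => Real.exp_pos _) Finset.univ_nonempty
  have hγdens : IsDensity (gibbs H β) := aux_gibbs_density H hH β hZpos
  have hvar : ∀ σ : Matrix (Fin d) (Fin d) ℂ, IsDensity σ →
      vnEntropy σ ≤ β * energy H σ + Real.log Z :=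
    fun σ hσ => aux_gibbs_var H hH β hZpos σ hσ
  have hK3 : vnEntropy (gibbs H β) = β * energy H (gibbs H β) + Real.log Z :=
    aux_vnEntropy_gibbs H hH β hZpos
  -- facts about the boundEnergy sets
  have hset : ∀ ρ : Matrix (Fin d) (Fin d) ℂ,
      ∀ e ∈ {e | ∃ σ : Matrix (Fin d) (Fin d) ℂ,
        IsDensity σ ∧ vnEntropy σ = vnEntropy ρ ∧ energy H σ = e},
      (vnEntropy ρ - Real.log Z) / β ≤ e := by
    rintro ρ e ⟨σ, hσ, hSeq, rfl⟩
    have := hvar σ hσ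
    rw [hSeq] at this
    rw [div_le_iff₀ hβ]
    linarith [mul_comm (energy H σ) β]
  have hbdd : ∀ ρ : Matrix (Fin d) (Fin d) ℂ,
      BddBelow {e | ∃ σ : Matrix (Fin d) (Fin d) ℂ,
        IsDensity σ ∧ vnEntropy σ = vnEntropy ρ ∧ energy H σ = e} :=
    fun ρ => ⟨(vnEntropy ρ - Real.log Z) / β, hset ρ⟩
  have hmem : ∀ ρ : Matrix (Fin d) (Fin d) ℂ, IsDensity ρ →
      energy H ρ ∈ {e | ∃ σ : Matrix (Fin d) (Fin d) ℂ,
        IsDensity σ ∧ vnEntropy σ = vnEntropy ρ ∧ energy H σ = e} :=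
    fun ρ hρ => ⟨ρ, hρ, rfl, rfl⟩
  have hub : ∀ ρ : Matrix (Fin d) (Fin d) ℂ, IsDensity ρ → boundEnergy H ρ ≤ energy H ρ :=
    fun ρ hρ => csInf_le (hbdd ρ) (hmem ρ hρ)
  have hlb : ∀ ρ : Matrix (Fin d) (Fin d) ℂ, IsDensity ρ →
      (vnEntropy ρ - Real.log Z) / β ≤ boundEnergy H ρ :=
    fun ρ hρ => le_csInf ⟨energy H ρ, hmem ρ hρ⟩ (hset ρ)
  -- bound energy of the Gibbs state equals its energy
  have hγeq : boundEnergy H (gibbs H β) = energy H (gibbs H β) := by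
    have h1 := hub _ hγdens
    have h2 := hlb _ hγdens
    have h3 : (vnEntropy (gibbs H β) - Real.log Z) / β = energy H (gibbs H β) := by
      rw [hK3]
      field_simp
      ring
    have h2' : energy H (gibbs H β) ≤ boundEnergy H (gibbs H β) := by
      rw [← h3]; exact h2
    linarith
  constructor
  · have h1 := hlb ρ' hρ'
    have h3 : (vnEntropy (gibbs H β) - Real.log Z) / β = energy H (gibbs H β) := by
      rw [hK3]; field_simp; ring
    have h4 : (1 / β) * (vnEntropy ρ' - vnEntropy (gibbs H β))
        = (vnEntropy ρ' - Real.log Z) / β - (vnEntropy (gibbs H β) - Real.log Z) / β := by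
      field_simp
      ring
    rw [hγeq, h4, ← h3]
    linarith
  · have h1 := hub ρ' hρ'
    rw [hγeq]
    linarith


end
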